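/- Let X and Y be independent real Gaussian random variables, each with mean 0 and variance 1/2. Then the law of the product XY is absolutely continuous with respect to Lebesgue measure, with density q₁(x) = (2/π) ∫₀^∞ exp(−2|x| cosh u) du for every x ≠ 0 (this equals (2/π)K₀(2|x|) where K₀ is the modified Bessel function of the second kind). -/

import Mathlib

open MeasureTheory ProbabilityTheory
open scoped ENNReal NNReal
open MeasureTheory Real Set

lemma my_integrable_comp_abs {f : ℝ → ℝ} (hf : IntegrableOn f (Set.Ioi 0)) :
    Integrable (fun t => f |t|) := by
  have h1 : IntegrableOn (fun t => f |t|) (Ioi 0) :=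
    hf.congr_fun (fun x hx => by rw [abs_of_pos hx]) measurableSet_Ioi
  have h2 : IntegrableOn (fun t => f |t|) (Iic 0) := by
    rw [← Measure.map_neg_eq_self (volume : Measure ℝ)]
    have m : MeasurableEmbedding fun x : ℝ => -x := (Homeomorph.neg ℝ).measurableEmbedding
    rw [m.integrableOn_map_iff]
    simp_rw [Function.comp_def, abs_neg, neg_preimage, neg_Iic, neg_zero]
    exact (integrableOn_Ici_iff_integrableOn_Ioi).mpr h1
  have := h2.union h1
  rw [Iic_union_Ioi] at this
  exact integrableOn_univ.mp this

open MeasureTheory Real Set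

lemma phi_image {a : ℝ} (ha : 0 < a) :
    (fun u => Real.sqrt a * Real.exp u) '' Set.univ = Set.Ioi 0 := by
  have hsa : 0 < Real.sqrt a := Real.sqrt_pos.mpr ha
  ext t
  simp only [image_univ, mem_range, mem_Ioi]
  constructor
  · rintro ⟨u, rfl⟩; positivity
  · intro ht
    exact ⟨Real.log (t / Real.sqrt a), by
      rw [Real.exp_log (by positivity)]; field_simp⟩

lemma phi_point {a : ℝ} (ha : 0 < a) (u : ℝ) :
    |Real.sqrt a * Real.exp u| • ((fun t => Real.exp (-t^2 - a^2/t^2) / t) (Real.sqrt a * Real.exp u))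
      = Real.exp (-(2*a) * Real.cosh (2*u)) := by
  have hsa : 0 < Real.sqrt a := Real.sqrt_pos.mpr ha
  have h1 : (Real.sqrt a * Real.exp u)^2 = a * Real.exp (2*u) := by
    rw [mul_pow, Real.sq_sqrt ha.le, ← Real.exp_nat_mul]
    ring_nf
  have h2 : a^2 / (a * Real.exp (2*u)) = a * Real.exp (-(2*u)) := by
    rw [Real.exp_neg]
    field_simp
  have habs : |Real.sqrt a * Real.exp u| = Real.sqrt a * Real.exp u :=
    abs_of_pos (by positivity)
  simp only [habs, smul_eq_mul, h1]
  rw [h2, Real.cosh_eq]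
  rw [div_eq_mul_inv, ← mul_assoc]
  rw [mul_comm (Real.sqrt a * Real.exp u)]
  rw [mul_assoc, mul_inv_cancel₀ (by positivity), mul_one]
  congr 1
  ring

section
open MeasureTheory Real Set

lemma subst_core {a : ℝ} (ha : 0 < a) :
    (∫ t in Set.Ioi (0:ℝ), Real.exp (-t^2 - a^2/t^2) / t)
      = ∫ u : ℝ, Real.exp (-(2*a) * Real.cosh (2*u)) ∧
    (IntegrableOn (fun t => Real.exp (-t^2 - a^2/t^2) / t) (Set.Ioi 0) ↔
      Integrable (fun u => Real.exp (-(2*a) * Real.cosh (2*u)))) := by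
  have hderiv : ∀ u ∈ (Set.univ : Set ℝ), HasDerivWithinAt (fun u => Real.sqrt a * Real.exp u)
      (Real.sqrt a * Real.exp u) Set.univ u := fun u _ =>
    ((Real.hasDerivAt_exp u).const_mul (Real.sqrt a)).hasDerivWithinAt
  have hinj : Set.InjOn (fun u => Real.sqrt a * Real.exp u) Set.univ := by
    intro x _ y _ h
    have hsa : Real.sqrt a ≠ 0 := ne_of_gt (Real.sqrt_pos.mpr ha)
    exact Real.exp_injective (mul_left_cancel₀ hsa h)
  constructor
  · rw [← phi_image ha,
      integral_image_eq_integral_abs_deriv_smul MeasurableSet.univ hderiv hinj]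
    simp_rw [phi_point ha]
    simp [Measure.restrict_univ]
  · rw [← phi_image ha,
      integrableOn_image_iff_integrableOn_abs_deriv_smul MeasurableSet.univ hderiv hinj]
    simp_rw [phi_point ha]
    simp [IntegrableOn, Measure.restrict_univ]

lemma cont_exp_cosh (a : ℝ) : Continuous (fun u : ℝ => Real.exp (-(2*a) * Real.cosh (2*u))) :=
  Real.continuous_exp.comp (continuous_const.mul
    (Real.continuous_cosh.comp (continuous_const.mul continuous_id)))

lemma integrable_exp_cosh {a : ℝ} (ha : 0 < a) :
    Integrable (fun u => Real.exp (-(2*a) * Real.cosh (2*u))) := by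
  have key : IntegrableOn (fun u => Real.exp (-(2*a) * Real.cosh (2*u))) (Set.Ioi 0) := by
    have hg : IntegrableOn (fun u => Real.exp (-a) * Real.exp (-(2*a*u))) (Set.Ioi 0) := by
      have := (exp_neg_integrableOn_Ioi 0 (b := 2*a) (by linarith)).const_mul (Real.exp (-a))
      simpa [mul_assoc, IntegrableOn] using this
    refine hg.mono' ((cont_exp_cosh a).aestronglyMeasurable).restrict ?_
    filter_upwards [ae_restrict_mem measurableSet_Ioi] with u hu
    rw [Real.norm_eq_abs, abs_of_pos (Real.exp_pos _), ← Real.exp_add]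
    apply Real.exp_le_exp.mpr
    have hcosh : (1 + 2*u)/2 ≤ Real.cosh (2*u) := by
      have h1 : Real.exp (2*u) ≥ 1 + 2*u := by
        have := Real.add_one_le_exp (2*u); linarith
      have h2 : 0 < Real.exp (-(2*u)) := Real.exp_pos _
      rw [Real.cosh_eq]; linarith
    nlinarith [mul_le_mul_of_nonneg_left hcosh (by linarith : (0:ℝ) ≤ 2*a)]
  have habs : ∀ u : ℝ, Real.exp (-(2*a) * Real.cosh (2*|u|)) = Real.exp (-(2*a) * Real.cosh (2*u)) := by
    intro u
    rw [show (2:ℝ)*|u| = |2*u| by rw [abs_mul]; norm_num, Real.cosh_abs]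
  exact (my_integrable_comp_abs key).congr (Filter.Eventually.of_forall habs)
end

section
open MeasureTheory Real Set

lemma real_final {a : ℝ} (ha : 0 < a) :
    Integrable (fun t => Real.exp (-t^2 - a^2/t^2) / |t|) ∧
    ∫ t : ℝ, Real.exp (-t^2 - a^2/t^2) / |t|
      = 2 * ∫ u in Set.Ioi (0:ℝ), Real.exp (-(2*a) * Real.cosh u) := by
  set f : ℝ → ℝ := fun t => Real.exp (-t^2 - a^2/t^2) / t with hf
  have habs : ∀ t : ℝ, f |t| = Real.exp (-t^2 - a^2/t^2) / |t| := by
    intro t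
    simp only [hf, sq_abs]
  have intOn : IntegrableOn f (Set.Ioi 0) := (subst_core ha).2.mpr (integrable_exp_cosh ha)
  have hint : Integrable (fun t => Real.exp (-t^2 - a^2/t^2) / |t|) :=
    (my_integrable_comp_abs intOn).congr (Filter.Eventually.of_forall habs)
  refine ⟨hint, ?_⟩
  have e1 : ∫ t : ℝ, Real.exp (-t^2 - a^2/t^2) / |t| = ∫ t : ℝ, f |t| :=
    integral_congr_ae (Filter.Eventually.of_forall fun t => (habs t).symm)
  rw [e1, integral_comp_abs, (subst_core ha).1]
  congr 1
  have h2 := MeasureTheory.Measure.integral_comp_mul_left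
    (fun w => Real.exp (-(2*a) * Real.cosh w)) 2
  have e2 : ∫ w : ℝ, Real.exp (-(2*a) * Real.cosh w)
      = 2 * ∫ u in Set.Ioi (0:ℝ), Real.exp (-(2*a) * Real.cosh u) := by
    rw [show (∫ w : ℝ, Real.exp (-(2*a) * Real.cosh w))
        = ∫ w : ℝ, (fun r => Real.exp (-(2*a) * Real.cosh r)) |w| from
      integral_congr_ae (Filter.Eventually.of_forall fun w => by
        simp only [Real.cosh_abs])]
    exact integral_comp_abs (f := fun w => Real.exp (-(2*a) * Real.cosh w))
  rw [show (fun u : ℝ => Real.exp (-(2*a) * Real.cosh (2*u)))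
      = fun u : ℝ => (fun w => Real.exp (-(2*a) * Real.cosh w)) (2*u) from rfl]
  rw [h2, e2]
  rw [smul_eq_mul]
  rw [show |(2:ℝ)⁻¹| = 2⁻¹ by norm_num]
  ring
end

section
open MeasureTheory Real Set ProbabilityTheory
open scoped ENNReal

noncomputable def myq (x : ℝ) : ℝ≥0∞ :=
  ∫⁻ t : ℝ, ENNReal.ofReal (gaussianPDFReal 0 (1/2) t) *
    (ENNReal.ofReal |t|⁻¹ * ENNReal.ofReal (gaussianPDFReal 0 (1/2) (x/t)))

lemma f_eq (t : ℝ) : gaussianPDFReal 0 (1/2) t = (Real.sqrt π)⁻¹ * Real.exp (-t^2) := by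
  rw [gaussianPDFReal]
  norm_num
  field_simp

lemma myq_pointwise (x t : ℝ) :
    ENNReal.ofReal (gaussianPDFReal 0 (1/2) t) *
      (ENNReal.ofReal |t|⁻¹ * ENNReal.ofReal (gaussianPDFReal 0 (1/2) (x/t)))
    = ENNReal.ofReal (π⁻¹ * (Real.exp (-t^2 - x^2/t^2) / |t|)) := by
  rw [← ENNReal.ofReal_mul (by positivity), ← ENNReal.ofReal_mul (gaussianPDFReal_nonneg _ _ _)]
  congr 1
  rw [f_eq, f_eq, div_pow]
  have hs : (Real.sqrt π)⁻¹ * (Real.sqrt π)⁻¹ = π⁻¹ := by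
    rw [← mul_inv, Real.mul_self_sqrt Real.pi_pos.le]
  rw [show -t^2 - x^2/t^2 = (-t^2) + (-(x^2/t^2)) by ring, Real.exp_add, Real.exp_neg,
    Real.exp_neg, div_eq_mul_inv]
  rw [← hs]
  ring

lemma myq_eq {x : ℝ} (hx : x ≠ 0) :
    myq x = ENNReal.ofReal
      ((2 / Real.pi) * ∫ u in Set.Ioi (0:ℝ), Real.exp (-(2 * |x|) * Real.cosh u)) := by
  have hax : 0 < |x| := abs_pos.mpr hx
  have hx2 : x^2 = |x|^2 := (sq_abs x).symm
  have hint : Integrable (fun t : ℝ => π⁻¹ * (Real.exp (-t^2 - x^2/t^2) / |t|)) := by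
    have := (real_final hax).1.const_mul π⁻¹
    simpa [← hx2] using this
  rw [myq]
  simp_rw [myq_pointwise x]
  rw [← MeasureTheory.ofReal_integral_eq_lintegral_ofReal hint
    (Filter.Eventually.of_forall fun t => by positivity)]
  congr 1
  rw [integral_const_mul]
  have h2 : ∫ t : ℝ, Real.exp (-t^2 - x^2/t^2) / |t|
      = 2 * ∫ u in Set.Ioi (0:ℝ), Real.exp (-(2 * |x|) * Real.cosh u) := by
    have := (real_final hax).2
    rw [← hx2] at this
    exact this
  rw [h2]
  ring

lemma myq_measurable : Measurable myq := by
  apply Measurable.lintegral_prod_right'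
    (f := fun p : ℝ × ℝ => ENNReal.ofReal (gaussianPDFReal 0 (1/2) p.2) *
      (ENNReal.ofReal |p.2|⁻¹ * ENNReal.ofReal (gaussianPDFReal 0 (1/2) (p.1/p.2))))
  exact (((measurable_gaussianPDFReal 0 (1/2)).comp measurable_snd).ennreal_ofReal).mul
    (((measurable_snd.abs.inv).ennreal_ofReal).mul
      (((measurable_gaussianPDFReal 0 (1/2)).comp
        (measurable_fst.div measurable_snd)).ennreal_ofReal))
end

section
open MeasureTheory Real Set ProbabilityTheory
open scoped ENNReal

lemma map_mul_prod :
    Measure.map (fun p : ℝ × ℝ => p.1 * p.2)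
      ((gaussianReal 0 (1/2)).prod (gaussianReal 0 (1/2))) = volume.withDensity myq := by
  have hν : gaussianReal 0 (1/2) = volume.withDensity (gaussianPDF 0 (1/2)) :=
    gaussianReal_of_var_ne_zero 0 (by norm_num)
  have hmul : Measurable (fun p : ℝ × ℝ => p.1 * p.2) := measurable_fst.mul measurable_snd
  ext s hs
  rw [Measure.map_apply hmul hs, withDensity_apply _ hs]
  set S : Set (ℝ × ℝ) := (fun p : ℝ × ℝ => p.1 * p.2) ⁻¹' s with hSdef
  have hS : MeasurableSet S := hmul hs
  rw [Measure.prod_apply hS]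
  have hinner : Measurable fun t => (gaussianReal 0 (1/2)) (Prod.mk t ⁻¹' S) :=
    measurable_measure_prodMk_left hS
  set g : ℝ → ℝ≥0∞ := fun t => (gaussianReal 0 (1/2)) (Prod.mk t ⁻¹' S) with hg
  -- replace outer measure by density
  conv_lhs => rw [hν]
  rw [lintegral_withDensity_eq_lintegral_mul _ (measurable_gaussianPDF _ _) hinner]
  -- the claim for t ≠ 0
  have claim : ∀ t : ℝ, t ≠ 0 → (gaussianReal 0 (1/2)) (Prod.mk t ⁻¹' S)
      = ENNReal.ofReal |t|⁻¹ * ∫⁻ z, s.indicator (fun _ => (1:ℝ≥0∞)) z *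
          ENNReal.ofReal (gaussianPDFReal 0 (1/2) (z/t)) ∂volume := by
    intro t ht
    have hA : MeasurableSet ((fun y => t * y) ⁻¹' s) := (measurable_const_mul t) hs
    have hPre : Prod.mk t ⁻¹' S = (fun y => t * y) ⁻¹' s := rfl
    have hK : Measurable fun z => s.indicator (fun _ => (1:ℝ≥0∞)) z *
        ENNReal.ofReal (gaussianPDFReal 0 (1/2) (z/t)) :=
      (measurable_const.indicator hs).mul
        (((measurable_gaussianPDFReal 0 (1/2)).comp (measurable_id.div_const t)).ennreal_ofReal)
    rw [hPre, hν, withDensity_apply _ hA, ← lintegral_indicator hA]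
    have hpt : ∀ y : ℝ, ((fun y => t * y) ⁻¹' s).indicator (gaussianPDF 0 (1/2)) y
        = (fun z => s.indicator (fun _ => (1:ℝ≥0∞)) z *
            ENNReal.ofReal (gaussianPDFReal 0 (1/2) (z/t))) (t * y) := by
      intro y
      simp only [Set.indicator, Set.mem_preimage, gaussianPDF]
      rw [mul_div_cancel_left₀ y ht]
      by_cases hy : t * y ∈ s <;> simp [hy]
    rw [lintegral_congr hpt, ← lintegral_map hK (measurable_const_mul t),
      Real.map_volume_mul_left ht, lintegral_smul_measure, abs_inv, smul_eq_mul]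
  -- rewrite using the claim, a.e.
  have h0 : ∀ᵐ t : ℝ, t ≠ 0 := by
    refine ae_iff.mpr ?_
    simp only [ne_eq, not_not]
    have h : {a : ℝ | a = 0} = {0} := by ext; simp
    rw [h, Real.volume_singleton]
  have step1 : ∫⁻ t, (gaussianPDF 0 (1/2) * fun t => (gaussianReal 0 (1/2)) (Prod.mk t ⁻¹' S)) t
      ∂volume = ∫⁻ t, ∫⁻ z, s.indicator (fun _ => (1:ℝ≥0∞)) z *
        (ENNReal.ofReal (gaussianPDFReal 0 (1/2) t) * (ENNReal.ofReal |t|⁻¹ *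
          ENNReal.ofReal (gaussianPDFReal 0 (1/2) (z/t)))) ∂volume ∂volume := by
    refine lintegral_congr_ae ?_
    filter_upwards [h0] with t ht
    rw [Pi.mul_apply, claim t ht, gaussianPDF]
    rw [← lintegral_const_mul' _ _ ENNReal.ofReal_ne_top,
      ← lintegral_const_mul' _ _ ENNReal.ofReal_ne_top]
    refine lintegral_congr fun z => ?_
    ring
  rw [step1]
  -- swap the integrals
  have hFmeas : Measurable (Function.uncurry fun t z =>
      s.indicator (fun _ => (1:ℝ≥0∞)) z *
        (ENNReal.ofReal (gaussianPDFReal 0 (1/2) t) * (ENNReal.ofReal |t|⁻¹ *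
          ENNReal.ofReal (gaussianPDFReal 0 (1/2) (z/t))))) := by
    apply ((measurable_const.indicator hs).comp measurable_snd).mul
    exact (((measurable_gaussianPDFReal 0 (1/2)).comp measurable_fst).ennreal_ofReal).mul
      (((measurable_fst.abs.inv).ennreal_ofReal).mul
        (((measurable_gaussianPDFReal 0 (1/2)).comp
          (measurable_snd.div measurable_fst)).ennreal_ofReal))
  rw [lintegral_lintegral_swap hFmeas.aemeasurable]
  have indne : ∀ z : ℝ, s.indicator (fun _ => (1:ℝ≥0∞)) z ≠ ⊤ := by
    intro z; by_cases hz : z ∈ s <;> simp [Set.indicator, hz]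
  have step2 : ∀ z : ℝ, (∫⁻ t, s.indicator (fun _ => (1:ℝ≥0∞)) z *
        (ENNReal.ofReal (gaussianPDFReal 0 (1/2) t) * (ENNReal.ofReal |t|⁻¹ *
          ENNReal.ofReal (gaussianPDFReal 0 (1/2) (z/t)))) ∂volume)
      = s.indicator myq z := by
    intro z
    rw [lintegral_const_mul' _ _ (indne z)]
    by_cases hz : z ∈ s <;> simp [Set.indicator, hz, myq]
  rw [lintegral_congr step2, lintegral_indicator hs]
end


/-- If `X` and `Y` are independent real Gaussian random variables, each with
mean 0 and variance 1/2, then the law of `X * Y` is absolutely continuous with respect to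
Lebesgue measure, with a density `q₁` satisfying
`q₁ x = (2/π) ∫₀^∞ exp(−2|x| cosh u) du` for every `x ≠ 0`
(this equals `(2/π) K₀(2|x|)` with `K₀` the modified Bessel function of the second kind). -/
theorem density_product_of_gaussians
    {Ω : Type*} [MeasurableSpace Ω] (μ : Measure Ω) [IsProbabilityMeasure μ]
    (X Y : Ω → ℝ)
    (hX : Measure.map X μ = gaussianReal 0 (1/2))
    (hY : Measure.map Y μ = gaussianReal 0 (1/2))
    (hXY : IndepFun X Y μ) :
    Measure.map (fun ω => X ω * Y ω) μ ≪ volume ∧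
    ∃ q₁ : ℝ → ℝ≥0∞,
      Measure.map (fun ω => X ω * Y ω) μ = volume.withDensity q₁ ∧
      ∀ x : ℝ, x ≠ 0 →
        q₁ x = ENNReal.ofReal
          ((2 / Real.pi) * ∫ u in Set.Ioi (0:ℝ), Real.exp (-(2 * |x|) * Real.cosh u)) := by
  have hmul : Measurable (fun p : ℝ × ℝ => p.1 * p.2) := measurable_fst.mul measurable_snd
  have hXm : AEMeasurable X μ := by
    by_contra h
    rw [Measure.map_of_not_aemeasurable h] at hX
    have := congrArg (fun m : Measure ℝ => m Set.univ) hX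
    simp [measure_univ] at this
  have hYm : AEMeasurable Y μ := by
    by_contra h
    rw [Measure.map_of_not_aemeasurable h] at hY
    have := congrArg (fun m : Measure ℝ => m Set.univ) hY
    simp [measure_univ] at this
  have hprod : μ.map (fun ω => (X ω, Y ω))
      = (gaussianReal 0 (1/2)).prod (gaussianReal 0 (1/2)) := by
    exact ((indepFun_iff_map_prod_eq_prod_map_map hXm hYm).mp hXY).trans (by rw [hX, hY])
  have hmap : μ.map (fun ω => X ω * Y ω) = volume.withDensity myq := by
    rw [← map_mul_prod, ← hprod,
      AEMeasurable.map_map_of_aemeasurable (by rw [hprod]; exact hmul.aemeasurable) (hXm.prodMk hYm)]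
    rfl
  rw [hmap]
  exact ⟨withDensity_absolutelyContinuous _ _, myq, rfl, fun x hx => myq_eq hx⟩
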